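/- Let P be a b₀×b₁ probability matrix with positive entries, and let λ₀, λ₁ ≤ 1 ≤ λ₀+λ₁ be P-sub-conjugate (i.e., for every probability matrix Q, K(Q‖P) ≥ λ₀·K(Q_{·*}‖P_{·*}) + λ₁·K(Q_{*·}‖P_{*·})). Then for any subsets B₀ ⊆ {0,...,b₀-1} and B₁ ⊆ {0,...,b₁-1}: p_{B₀B₁} ≤ (p_{B₀*})^{λ₀}·(p_{*B₁})^{λ₁}, where p_{B₀B₁} = ∑_{j∈B₀, k∈B₁} p_{jk}, p_{B₀*} = ∑_{j∈B₀} p_{j*}, p_{*B₁} = ∑_{k∈B₁} p_{*k}. -/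

import Mathlib

open Finset

/-- Log-sum inequality in the form we need. -/
lemma logsum_aux {ι : Type*} (s : Finset ι) (a b : ι → ℝ)
    (ha : ∀ i ∈ s, 0 < a i) (hb : ∀ i ∈ s, 0 < b i)
    (hA : ∑ i ∈ s, a i = 1) :
    -Real.log (∑ i ∈ s, b i) ≤ ∑ i ∈ s, a i * Real.log (a i / b i) := by
  set Bt := ∑ i ∈ s, b i with hBt
  have hs : s.Nonempty := by
    by_contra h
    rw [Finset.not_nonempty_iff_eq_empty] at h
    simp [h] at hA
  have hBtpos : 0 < Bt := Finset.sum_pos hb hs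
  have key : ∀ i ∈ s, a i - b i / Bt ≤
      a i * Real.log (a i / b i) + a i * Real.log Bt := by
    intro i hi
    have hai := ha i hi; have hbi := hb i hi
    have h1 : a i * Real.log (a i / b i) + a i * Real.log Bt
        = -(a i * Real.log (b i / (a i * Bt))) := by
      rw [Real.log_div (ne_of_gt hbi) (by positivity),
        Real.log_mul (ne_of_gt hai) (ne_of_gt hBtpos),
        Real.log_div (ne_of_gt hai) (ne_of_gt hbi)]
      ring
    rw [h1]
    have h2 : Real.log (b i / (a i * Bt)) ≤ b i / (a i * Bt) - 1 :=
      Real.log_le_sub_one_of_pos (by positivity)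
    have h4 := mul_le_mul_of_nonneg_left h2 hai.le
    have h3 : a i * (b i / (a i * Bt) - 1) = b i / Bt - a i := by
      field_simp
    linarith
  have hsum := Finset.sum_le_sum key
  have e1 : ∑ i ∈ s, (a i - b i / Bt) = 0 := by
    rw [Finset.sum_sub_distrib, hA, ← Finset.sum_div, ← hBt,
      div_self hBtpos.ne']
    ring
  have e2 : ∑ i ∈ s, (a i * Real.log (a i / b i) + a i * Real.log Bt)
      = (∑ i ∈ s, a i * Real.log (a i / b i)) + Real.log Bt := by
    rw [Finset.sum_add_distrib, ← Finset.sum_mul, hA, one_mul]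
  rw [e1, e2] at hsum
  linarith

/-- `λ₀, λ₁` are `P`-sub-conjugate: for every probability matrix `Q` (same shape
as `P`), `K(Q‖P) ≥ λ₀ K(Q_{·*}‖P_{·*}) + λ₁ K(Q_{*·}‖P_{*·})`. -/
def SubConjugate {α β : Type*} [Fintype α] [Fintype β]
    (P : α → β → ℝ) (lam0 lam1 : ℝ) : Prop :=
  ∀ Q : α → β → ℝ, (∀ j k, 0 ≤ Q j k) → (∑ j, ∑ k, Q j k = 1) →
    lam0 * (∑ j, (∑ k, Q j k) * Real.log ((∑ k, Q j k) / (∑ k, P j k))) +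
      lam1 * (∑ k, (∑ j, Q j k) * Real.log ((∑ j, Q j k) / (∑ j, P j k))) ≤
    ∑ j, ∑ k, Q j k * Real.log (Q j k / P j k)

/-- If `λ₀, λ₁ ≤ 1 ≤ λ₀+λ₁` are `P`-sub-conjugate, then for any bucket pair
`B₀, B₁`: `p_{B₀B₁} ≤ (p_{B₀*})^{λ₀} (p_{*B₁})^{λ₁}`. -/
theorem bucket_prob_bound (b₀ b₁ : ℕ) (P : Fin b₀ → Fin b₁ → ℝ)
    (hPpos : ∀ j k, 0 < P j k) (hPsum : ∑ j, ∑ k, P j k = 1)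
    (lam0 lam1 : ℝ) (hl0 : lam0 ≤ 1) (hl1 : lam1 ≤ 1) (hls : 1 ≤ lam0 + lam1)
    (hsub : SubConjugate P lam0 lam1)
    (B₀ : Finset (Fin b₀)) (B₁ : Finset (Fin b₁)) :
    ∑ j ∈ B₀, ∑ k ∈ B₁, P j k ≤
      (∑ j ∈ B₀, ∑ k, P j k) ^ lam0 * (∑ k ∈ B₁, ∑ j, P j k) ^ lam1 := by
  rcases B₀.eq_empty_or_nonempty with h0 | h0
  · simp only [h0, Finset.sum_empty]
    exact mul_nonneg (Real.rpow_nonneg le_rfl lam0)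
      (Real.rpow_nonneg (Finset.sum_nonneg fun k _ =>
        Finset.sum_nonneg fun j _ => (hPpos j k).le) lam1)
  rcases B₁.eq_empty_or_nonempty with h1 | h1
  · simp only [h1, Finset.sum_empty, Finset.sum_const_zero]
    exact mul_nonneg (Real.rpow_nonneg (Finset.sum_nonneg fun j _ =>
      Finset.sum_nonneg fun k _ => (hPpos j k).le) lam0)
      (Real.rpow_nonneg le_rfl lam1)
  have hl0' : 0 ≤ lam0 := by linarith
  have hl1' : 0 ≤ lam1 := by linarith
  set S := ∑ j ∈ B₀, ∑ k ∈ B₁, P j k with hSdef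
  have hS : 0 < S :=
    Finset.sum_pos (fun j _ => Finset.sum_pos (fun k _ => hPpos j k) h1) h0
  set A := ∑ j ∈ B₀, ∑ k, P j k with hAdef
  set Bv := ∑ k ∈ B₁, ∑ j, P j k with hBdef
  obtain ⟨k₀, hk₀⟩ := h1
  obtain ⟨j₀, hj₀⟩ := h0
  have hApos : 0 < A :=
    Finset.sum_pos (fun j _ => Finset.sum_pos (fun k _ => hPpos j k)
      ⟨k₀, Finset.mem_univ k₀⟩) ⟨j₀, hj₀⟩
  have hBpos : 0 < Bv :=
    Finset.sum_pos (fun k _ => Finset.sum_pos (fun j _ => hPpos j k)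
      ⟨j₀, Finset.mem_univ j₀⟩) ⟨k₀, hk₀⟩
  set Q : Fin b₀ → Fin b₁ → ℝ :=
    fun j k => if j ∈ B₀ ∧ k ∈ B₁ then P j k / S else 0 with hQ
  have hQnn : ∀ j k, 0 ≤ Q j k := by
    intro j k
    simp only [hQ]
    split
    · exact (div_pos (hPpos j k) hS).le
    · exact le_rfl
  have hrow : ∀ j, ∑ k, Q j k = if j ∈ B₀ then (∑ k ∈ B₁, P j k) / S else 0 := by
    intro j
    by_cases hj : j ∈ B₀ <;>
      simp [hQ, hj, Finset.sum_ite_mem, Finset.sum_div]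
  have hcol : ∀ k, ∑ j, Q j k = if k ∈ B₁ then (∑ j ∈ B₀, P j k) / S else 0 := by
    intro k
    by_cases hk : k ∈ B₁ <;>
      simp [hQ, hk, Finset.sum_ite_mem, Finset.sum_div]
  have hrS : ∑ j ∈ B₀, (∑ k ∈ B₁, P j k) / S = 1 := by
    rw [← Finset.sum_div, ← hSdef, div_self hS.ne']
  have hcS : ∑ k ∈ B₁, (∑ j ∈ B₀, P j k) / S = 1 := by
    rw [← Finset.sum_div, Finset.sum_comm, ← hSdef, div_self hS.ne']
  have hQsum : ∑ j, ∑ k, Q j k = 1 := by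
    simp only [hrow]
    rw [Finset.sum_ite_mem, Finset.univ_inter, hrS]
  have hKL : ∑ j, ∑ k, Q j k * Real.log (Q j k / P j k) = -Real.log S := by
    have e : ∀ j k, Q j k * Real.log (Q j k / P j k) = Q j k * (-Real.log S) := by
      intro j k
      by_cases h : j ∈ B₀ ∧ k ∈ B₁
      · simp only [hQ, if_pos h]
        rw [div_right_comm, div_self (hPpos j k).ne', ← Real.log_inv, one_div]
      · simp [hQ, h]
    simp only [e]
    simp only [← Finset.sum_mul]
    rw [hQsum, one_mul]
  have erow : (∑ j, (∑ k, Q j k) * Real.log ((∑ k, Q j k) / (∑ k, P j k)))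
      = ∑ j ∈ B₀, ((∑ k ∈ B₁, P j k) / S) *
          Real.log (((∑ k ∈ B₁, P j k) / S) / (∑ k, P j k)) := by
    rw [← Finset.sum_subset (Finset.subset_univ B₀)
      (fun j _ hj => by rw [hrow, if_neg hj, zero_mul])]
    exact Finset.sum_congr rfl fun j hj => by rw [hrow, if_pos hj]
  have ecol : (∑ k, (∑ j, Q j k) * Real.log ((∑ j, Q j k) / (∑ j, P j k)))
      = ∑ k ∈ B₁, ((∑ j ∈ B₀, P j k) / S) *
          Real.log (((∑ j ∈ B₀, P j k) / S) / (∑ j, P j k)) := by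
    rw [← Finset.sum_subset (Finset.subset_univ B₁)
      (fun k _ hk => by rw [hcol, if_neg hk, zero_mul])]
    exact Finset.sum_congr rfl fun k hk => by rw [hcol, if_pos hk]
  have hrowKL : -Real.log A ≤
      ∑ j, (∑ k, Q j k) * Real.log ((∑ k, Q j k) / (∑ k, P j k)) := by
    rw [erow]
    exact logsum_aux B₀ (fun j => (∑ k ∈ B₁, P j k) / S) (fun j => ∑ k, P j k)
      (fun j hj => div_pos (Finset.sum_pos (fun k _ => hPpos j k) ⟨k₀, hk₀⟩) hS)
      (fun j hj => Finset.sum_pos (fun k _ => hPpos j k) ⟨k₀, Finset.mem_univ k₀⟩)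
      hrS
  have hcolKL : -Real.log Bv ≤
      ∑ k, (∑ j, Q j k) * Real.log ((∑ j, Q j k) / (∑ j, P j k)) := by
    rw [ecol]
    exact logsum_aux B₁ (fun k => (∑ j ∈ B₀, P j k) / S) (fun k => ∑ j, P j k)
      (fun k hk => div_pos (Finset.sum_pos (fun j _ => hPpos j k) ⟨j₀, hj₀⟩) hS)
      (fun k hk => Finset.sum_pos (fun j _ => hPpos j k) ⟨j₀, Finset.mem_univ j₀⟩)
      hcS
  have hmain := hsub Q hQnn hQsum
  rw [hKL] at hmain
  have hcomb : Real.log S ≤ lam0 * Real.log A + lam1 * Real.log Bv := by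
    have h5 := mul_le_mul_of_nonneg_left hrowKL hl0'
    have h6 := mul_le_mul_of_nonneg_left hcolKL hl1'
    nlinarith
  calc S = Real.exp (Real.log S) := (Real.exp_log hS).symm
    _ ≤ Real.exp (lam0 * Real.log A + lam1 * Real.log Bv) :=
        Real.exp_le_exp.mpr hcomb
    _ = A ^ lam0 * Bv ^ lam1 := by
        rw [Real.rpow_def_of_pos hApos, Real.rpow_def_of_pos hBpos,
          ← Real.exp_add, mul_comm lam0, mul_comm lam1]
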